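/- In the symplectic setting, if a, b ∈ V satisfy B(a, b) = 0, then for every X ∈ gl(V)_B one has ⁅D_a, ⁅D_b, X⁆⁆ = B(a, X b)·D_{a,b}. -/
import Mathlib


/-- The endomorphism `D_{a,b} : v ↦ B(v,b)·a + B(v,a)·b` of the symplectic setting. -/
def Dpair {k V : Type*} [Field k] [AddCommGroup V] [Module k V]
    (B : LinearMap.BilinForm k V) (a b : V) : Module.End k V :=
  (B.flip b).smulRight a + (B.flip a).smulRight b

/-- The endomorphism `D_a : v ↦ B(v,a)·a` of the symplectic setting. -/
def Dsq {k V : Type*} [Field k] [AddCommGroup V] [Module k V]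
    (B : LinearMap.BilinForm k V) (a : V) : Module.End k V :=
  (B.flip a).smulRight a

/-- In the symplectic setting, if `B(a,b) = 0` then
`⁅D_a, ⁅D_b, X⁆⁆ = B(a, Xb)·D_{a,b}` for every `X ∈ gl(V)_B`. -/
theorem stmt7 {k V : Type*} [Field k] [AddCommGroup V] [Module k V]
    (hchar : (2 : k) ≠ 0)
    (B : LinearMap.BilinForm k V) (halt : ∀ v : V, B v v = 0)
    (a b : V) (hab : B a b = 0) :
    ∀ X : Module.End k V, (∀ u v : V, B u (X v) = B v (X u)) →
      ⁅Dsq B a, ⁅Dsq B b, X⁆⁆ = B a (X b) • Dpair B a b := by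
  intro X hX
  have hskew : ∀ x y : V, B x y = -B y x := by
    intro x y
    have h := halt (x + y)
    simp only [map_add, LinearMap.add_apply, halt x, halt y] at h
    linear_combination h
  have hba : B b a = 0 := by rw [hskew]; simp [hab]
  ext v
  simp only [Ring.lie_def, Dsq, Dpair, LinearMap.sub_apply, Module.End.mul_apply,
    LinearMap.smulRight_apply, LinearMap.flip_apply, LinearMap.smul_apply,
    LinearMap.add_apply, map_sub, map_smul, smul_eq_mul, smul_smul, smul_sub]
  simp only [LinearMap.BilinForm.flip_apply]
  rw [hab, hba, hskew (X b) a, hskew (X a) b, ← hX a b]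
  module
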